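/- arXiv:1310.8398 — 2 statements merged into one kernel-verified Lean document; each statement's English description precedes it below -/
import Mathlib

section
/- Let F : ℝⁿ → ℝ be a norm (F(x+y) ≤ F(x) + F(y), F(λ•x) = |λ| F(x), and F(x) = 0 iff x = 0), and let d_F(x,y) = F(y − x) be the associated translation-invariant metric. Then there exists a linear equivalence A : ℝⁿ ≃ₗ[ℝ] ℝⁿ such that for every bijection g : ℝⁿ → ℝⁿ satisfying d_F(g x, g y) = d_F(x, y) for all x, y, the conjugated map A ∘ g ∘ A⁻¹ is a Euclidean isometry: ‖A(g(A⁻¹ y)) − A(g(A⁻¹ x))‖ = ‖y − x‖ for all x, y ∈ ℝⁿ, where ‖·‖ is the Euclidean norm. -/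
set_option maxHeartbeats 1000000
set_option synthInstance.maxHeartbeats 400000

open MeasureTheory

namespace NormConj

variable {n : ℕ}

local notation "E" => EuclideanSpace ℝ (Fin n)

/-- Type copy of `ℝⁿ` that will carry the norm `F`. -/
def NV (n : ℕ) := EuclideanSpace ℝ (Fin n)

noncomputable instance : AddCommGroup (NV n) := inferInstanceAs (AddCommGroup (EuclideanSpace ℝ (Fin n)))
noncomputable instance : Module ℝ (NV n) := inferInstanceAs (Module ℝ (EuclideanSpace ℝ (Fin n)))

noncomputable def toNV : EuclideanSpace ℝ (Fin n) ≃ₗ[ℝ] NV n := LinearEquiv.refl ℝ _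

variable (F : EuclideanSpace ℝ (Fin n) → ℝ)
  (h_subadd : ∀ x y, F (x + y) ≤ F x + F y)
  (h_homog : ∀ (x : EuclideanSpace ℝ (Fin n)) (l : ℝ), F (l • x) = |l| * F x)
  (h_sep : ∀ x : EuclideanSpace ℝ (Fin n), F x = 0 ↔ x = 0)

@[reducible]
noncomputable def nvGroup : NormedAddCommGroup (NV n) :=
  AddGroupNorm.toNormedAddCommGroup
    { toFun := fun x => F (toNV.symm x)
      map_zero' := by simpa using (h_sep 0).2 rfl
      add_le' := fun x y => h_subadd _ _
      neg' := fun x => by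
        have := h_homog (toNV.symm x) (-1)
        simpa using this
      eq_zero_of_map_eq_zero' := fun x hx => (h_sep _).1 hx }

@[reducible]
noncomputable def nvSpace : @NormedSpace ℝ (NV n) _ (nvGroup F h_subadd h_homog h_sep).toSeminormedAddCommGroup :=
  letI := nvGroup F h_subadd h_homog h_sep
  { (inferInstance : Module ℝ (NV n)) with
    norm_smul_le := fun l x => by
      change F (l • (toNV.symm x)) ≤ _
      rw [h_homog]
      exact le_of_eq rfl }

end NormConj

namespace NormConj

variable {n : ℕ}
variable (F : EuclideanSpace ℝ (Fin n) → ℝ)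
  (h_subadd : ∀ x y, F (x + y) ≤ F x + F y)
  (h_homog : ∀ (x : EuclideanSpace ℝ (Fin n)) (l : ℝ), F (l • x) = |l| * F x)
  (h_sep : ∀ x : EuclideanSpace ℝ (Fin n), F x = 0 ↔ x = 0)

instance : FiniteDimensional ℝ (NV n) :=
  Module.Finite.equiv (toNV (n := n))

/-- The identity as a continuous linear equivalence between Euclidean `ℝⁿ` and `(ℝⁿ, F)`. -/
noncomputable def toNVL :
    letI := nvGroup F h_subadd h_homog h_sep
    letI := nvSpace F h_subadd h_homog h_sep
    EuclideanSpace ℝ (Fin n) ≃L[ℝ] NV n :=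
  letI := nvGroup F h_subadd h_homog h_sep
  letI := nvSpace F h_subadd h_homog h_sep
  LinearEquiv.toContinuousLinearEquiv toNV

include h_subadd h_homog h_sep in
theorem norm_bounds : ∃ a b : ℝ, 0 < a ∧ 0 < b ∧
    ∀ x : EuclideanSpace ℝ (Fin n), a * ‖x‖ ≤ F x ∧ F x ≤ b * ‖x‖ := by
  letI := nvGroup F h_subadd h_homog h_sep
  letI := nvSpace F h_subadd h_homog h_sep
  set e := toNVL F h_subadd h_homog h_sep
  obtain ⟨b, hb, hbd⟩ := e.toContinuousLinearMap.isBoundedLinearMap.bound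
  obtain ⟨a', ha', had⟩ := e.symm.toContinuousLinearMap.isBoundedLinearMap.bound
  refine ⟨a'⁻¹, b, by positivity, hb, fun x => ?_⟩
  constructor
  · have h1 : ‖x‖ ≤ a' * F x := had (e x)
    rw [inv_mul_le_iff₀ ha']
    linarith
  · exact hbd x

include h_subadd h_homog h_sep in
theorem continuous_F : Continuous F := by
  letI := nvGroup F h_subadd h_homog h_sep
  letI := nvSpace F h_subadd h_homog h_sep
  have : Continuous (toNVL F h_subadd h_homog h_sep : EuclideanSpace ℝ (Fin n) → NV n) :=
    (toNVL F h_subadd h_homog h_sep).continuous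
  exact continuous_norm.comp this

end NormConj

namespace NormConj

variable {n : ℕ}
variable (F : EuclideanSpace ℝ (Fin n) → ℝ)
  (h_subadd : ∀ x y, F (x + y) ≤ F x + F y)
  (h_homog : ∀ (x : EuclideanSpace ℝ (Fin n)) (l : ℝ), F (l • x) = |l| * F x)
  (h_sep : ∀ x : EuclideanSpace ℝ (Fin n), F x = 0 ↔ x = 0)

local notation "M" => (EuclideanSpace ℝ (Fin n)) →L[ℝ] (EuclideanSpace ℝ (Fin n))

/-- The group of linear `F`-isometries, as a subgroup of the units of `E →L[ℝ] E`. -/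
noncomputable def isoGroup : Subgroup (M)ˣ where
  carrier := {u | ∀ x, F ((u : M) x) = F x}
  mul_mem' := by
    intro u v hu hv x
    have h1 : ((u * v : (M)ˣ) : M) x = (u : M) ((v : M) x) := rfl
    rw [h1, hu, hv]
  one_mem' := fun x => rfl
  inv_mem' := by
    intro u hu x
    have h1 : (u : M) (((u⁻¹ : (M)ˣ) : M) x) = x := by
      rw [← ContinuousLinearMap.comp_apply, ← ContinuousLinearMap.mul_def, u.mul_inv]
      rfl
    calc F (((u⁻¹ : (M)ˣ) : M) x) = F ((u : M) (((u⁻¹ : (M)ˣ) : M) x)) := (hu _).symm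
    _ = F x := by rw [h1]

end NormConj

namespace NormConj

variable {n : ℕ}
variable (F : EuclideanSpace ℝ (Fin n) → ℝ)
  (h_subadd : ∀ x y, F (x + y) ≤ F x + F y)
  (h_homog : ∀ (x : EuclideanSpace ℝ (Fin n)) (l : ℝ), F (l • x) = |l| * F x)
  (h_sep : ∀ x : EuclideanSpace ℝ (Fin n), F x = 0 ↔ x = 0)

local notation "M" => (EuclideanSpace ℝ (Fin n)) →L[ℝ] (EuclideanSpace ℝ (Fin n))

include h_subadd h_homog h_sep in
theorem isoGroup_isCompact : IsCompact ((isoGroup F : Set (M)ˣ)) := by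
  obtain ⟨a, b, ha, hb, hab⟩ := norm_bounds F h_subadd h_homog h_sep
  have hF : Continuous F := continuous_F F h_subadd h_homog h_sep
  -- the embedding into M × Mᵐᵒᵖ
  rw [Units.isEmbedding_embedProduct.isCompact_iff]
  set C : ℝ := b / a with hC
  -- the image set
  have himage : (Units.embedProduct M) '' (isoGroup F : Set (M)ˣ) =
      {p : M × (M)ᵐᵒᵖ |
        p.1 * (MulOpposite.unop p.2) = 1 ∧ (MulOpposite.unop p.2) * p.1 = 1 ∧
        (∀ x, F (p.1 x) = F x) ∧ (∀ x, F ((MulOpposite.unop p.2) x) = F x)} := by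
    ext p
    constructor
    · rintro ⟨u, hu, rfl⟩
      refine ⟨u.mul_inv, u.inv_mul, hu, ?_⟩
      exact (isoGroup F).inv_mem hu
    · rintro ⟨h1, h2, h3, h4⟩
      exact ⟨⟨p.1, MulOpposite.unop p.2, h1, h2⟩, h3, by
        simp [Units.embedProduct]⟩
  rw [himage]
  have hCnn : 0 ≤ C := by positivity
  -- bound on operator norms of members
  have hbound : ∀ f : M, (∀ x, F (f x) = F x) → ‖f‖ ≤ C := by
    intro f hf
    refine ContinuousLinearMap.opNorm_le_bound f hCnn fun x => ?_
    have h1 : a * ‖f x‖ ≤ F (f x) := (hab (f x)).1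
    have h2 : F x ≤ b * ‖x‖ := (hab x).2
    rw [hf x] at h1
    rw [hC, div_mul_eq_mul_div, le_div_iff₀ ha]
    nlinarith [norm_nonneg x]
  have happly : ∀ x : EuclideanSpace ℝ (Fin n),
      Continuous fun f : M => f x := fun x =>
    (ContinuousLinearMap.apply ℝ (EuclideanSpace ℝ (Fin n)) x).continuous
  have hclosed : IsClosed {p : M × (M)ᵐᵒᵖ |
      p.1 * (MulOpposite.unop p.2) = 1 ∧ (MulOpposite.unop p.2) * p.1 = 1 ∧
      (∀ x, F (p.1 x) = F x) ∧ (∀ x, F ((MulOpposite.unop p.2) x) = F x)} := by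
    have cunop : Continuous fun p : M × (M)ᵐᵒᵖ => MulOpposite.unop p.2 :=
      MulOpposite.continuous_unop.comp continuous_snd
    simp only [Set.setOf_and, Set.setOf_forall]
    refine IsClosed.inter (isClosed_eq (continuous_fst.mul cunop) continuous_const) ?_
    refine IsClosed.inter (isClosed_eq (cunop.mul continuous_fst) continuous_const) ?_
    refine IsClosed.inter ?_ ?_
    · exact isClosed_iInter fun x => isClosed_eq
        (hF.comp ((happly x).comp continuous_fst)) continuous_const
    · exact isClosed_iInter fun x => isClosed_eq
        (hF.comp ((happly x).comp cunop)) continuous_const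
  refine IsCompact.of_isClosed_subset
    ((isCompact_closedBall (0 : M) C).prod
      ((isCompact_closedBall (0 : M) C).image MulOpposite.continuous_op)) hclosed ?_
  rintro p ⟨-, -, h3, h4⟩
  refine ⟨mem_closedBall_zero_iff.2 (hbound _ h3), ?_⟩
  exact ⟨MulOpposite.unop p.2, mem_closedBall_zero_iff.2 (hbound _ h4), rfl⟩

end NormConj

namespace NormConj

variable {n : ℕ}
variable (F : EuclideanSpace ℝ (Fin n) → ℝ)
  (h_subadd : ∀ x y, F (x + y) ≤ F x + F y)
  (h_homog : ∀ (x : EuclideanSpace ℝ (Fin n)) (l : ℝ), F (l • x) = |l| * F x)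
  (h_sep : ∀ x : EuclideanSpace ℝ (Fin n), F x = 0 ↔ x = 0)

local notation "M" => (EuclideanSpace ℝ (Fin n)) →L[ℝ] (EuclideanSpace ℝ (Fin n))
local notation "E" => EuclideanSpace ℝ (Fin n)

noncomputable instance : MeasurableSpace (isoGroup F) := borel _
instance : BorelSpace (isoGroup F) := ⟨rfl⟩

include h_subadd h_homog h_sep in
/-- Existence of an inner product invariant under all linear `F`-isometries. -/
theorem exists_invariant_inner :
    ∃ B : E → E → ℝ,
      (∀ x y, B x y = B y x) ∧
      (∀ x x' y, B (x + x') y = B x y + B x' y) ∧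
      (∀ (c : ℝ) (x y : E), B (c • x) y = c * B x y) ∧
      (∀ x, 0 ≤ B x x) ∧ (∀ x : E, x ≠ 0 → 0 < B x x) ∧
      (∀ T : M, (∀ z, F (T z) = F z) → ∀ x y, B (T x) (T y) = B x y) := by
  classical
  haveI : CompactSpace (isoGroup F) :=
    isCompact_iff_compactSpace.1 (isoGroup_isCompact F h_subadd h_homog h_sep)
  haveI : SecondCountableTopology ((M)ᵐᵒᵖ) :=
    (MulOpposite.opHomeomorph : M ≃ₜ (M)ᵐᵒᵖ).symm.isEmbedding.secondCountableTopology
  haveI : SecondCountableTopology ((M) × (M)ᵐᵒᵖ) := by infer_instance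
  haveI : SecondCountableTopology ((M)ˣ) :=
    Units.isEmbedding_embedProduct.secondCountableTopology
  haveI : SecondCountableTopology (isoGroup F) :=
    Topology.IsEmbedding.subtypeVal.secondCountableTopology
  haveI : LocallyCompactSpace (isoGroup F) := by infer_instance
  let μ : Measure (isoGroup F) := MeasureTheory.Measure.haar
  haveI : IsFiniteMeasure μ := CompactSpace.isFiniteMeasure
  -- continuity helpers
  have cinv : Continuous fun u : isoGroup F => ((↑(u : (M)ˣ)⁻¹ : M)) := by
    exact Units.continuous_coe_inv.comp continuous_subtype_val
  have happly : ∀ x : E, Continuous fun f : M => f x := fun x =>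
    (ContinuousLinearMap.apply ℝ (EuclideanSpace ℝ (Fin n)) x).continuous
  have hcont : ∀ x y : E, Continuous fun u : isoGroup F =>
      (inner ℝ ((↑(u : (M)ˣ)⁻¹ : M) x) ((↑(u : (M)ˣ)⁻¹ : M) y) : ℝ) := by
    intro x y
    exact Continuous.inner ((happly x).comp cinv) ((happly y).comp cinv)
  have hint : ∀ x y : E, Integrable (fun u : isoGroup F =>
      (inner ℝ ((↑(u : (M)ˣ)⁻¹ : M) x) ((↑(u : (M)ˣ)⁻¹ : M) y) : ℝ)) μ := by
    intro x y
    exact (hcont x y).integrable_of_hasCompactSupport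
      (IsCompact.of_isClosed_subset isCompact_univ (isClosed_tsupport _) (Set.subset_univ _))
  refine ⟨fun x y => ∫ u : isoGroup F,
      (inner ℝ ((↑(u : (M)ˣ)⁻¹ : M) x) ((↑(u : (M)ˣ)⁻¹ : M) y) : ℝ) ∂μ,
    ?_, ?_, ?_, ?_, ?_, ?_⟩
  · intro x y
    simp_rw [real_inner_comm]
  · intro x x' y
    dsimp only
    have : (fun u : isoGroup F =>
        (inner ℝ ((↑(u : (M)ˣ)⁻¹ : M) (x + x')) ((↑(u : (M)ˣ)⁻¹ : M) y) : ℝ)) =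
        fun u : isoGroup F =>
        (inner ℝ ((↑(u : (M)ˣ)⁻¹ : M) x) ((↑(u : (M)ˣ)⁻¹ : M) y) : ℝ) +
        (inner ℝ ((↑(u : (M)ˣ)⁻¹ : M) x') ((↑(u : (M)ˣ)⁻¹ : M) y) : ℝ) := by
      funext u
      rw [map_add, inner_add_left]
    rw [this, integral_add (hint x y) (hint x' y)]
  · intro c x y
    dsimp only
    have : (fun u : isoGroup F =>
        (inner ℝ ((↑(u : (M)ˣ)⁻¹ : M) (c • x)) ((↑(u : (M)ˣ)⁻¹ : M) y) : ℝ)) =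
        fun u : isoGroup F =>
        c * (inner ℝ ((↑(u : (M)ˣ)⁻¹ : M) x) ((↑(u : (M)ˣ)⁻¹ : M) y) : ℝ) := by
      funext u
      rw [_root_.map_smul, real_inner_smul_left]
    rw [this, MeasureTheory.integral_const_mul]
  · intro x
    exact integral_nonneg fun u => real_inner_self_nonneg
  · intro x hx
    rw [integral_pos_iff_support_of_nonneg (fun u => real_inner_self_nonneg) (hint x x)]
    have : Function.support (fun u : isoGroup F =>
        (inner ℝ ((↑(u : (M)ˣ)⁻¹ : M) x) ((↑(u : (M)ˣ)⁻¹ : M) x) : ℝ)) = Set.univ := by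
      ext u
      simp only [Function.mem_support, Set.mem_univ, iff_true]
      have hne : ((↑(u : (M)ˣ)⁻¹ : M) x) ≠ 0 := by
        intro h0
        apply hx
        have : ((u : (M)ˣ) : M) ((↑(u : (M)ˣ)⁻¹ : M) x) = x := by
          rw [← ContinuousLinearMap.comp_apply, ← ContinuousLinearMap.mul_def,
            (u : (M)ˣ).mul_inv]
          rfl
        rw [← this, h0, map_zero]
      intro h0
      exact hne ((inner_self_eq_zero (𝕜 := ℝ)).1 h0)
    rw [this]
    exact isOpen_univ.measure_pos μ ⟨1, trivial⟩
  · -- invariance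
    intro T hT x y
    -- `T` is bijective
    have hinj : Function.Injective T := by
      intro a b hab
      have : F (T (a - b)) = 0 := by rw [map_sub, sub_eq_zero.2 hab]; exact (h_sep 0).2 rfl
      rw [hT] at this
      exact sub_eq_zero.1 ((h_sep _).1 this)
    have hbij : Function.Bijective (T.toLinearMap) :=
      ⟨hinj, (LinearMap.injective_iff_surjective).1 hinj⟩
    let Teq : E ≃L[ℝ] E :=
      LinearEquiv.toContinuousLinearEquiv (LinearEquiv.ofBijective T.toLinearMap hbij)
    let w : (M)ˣ := (ContinuousLinearEquiv.unitsEquiv ℝ (EuclideanSpace ℝ (Fin n))).symm Teq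
    have hwval : (w : M) = T := by
      ext z; rfl
    have hwmem : w ∈ isoGroup F := by
      intro z
      rw [hwval]
      exact hT z
    let w' : isoGroup F := ⟨w, hwmem⟩
    have key := integral_mul_left_eq_self (μ := μ)
      (fun u : isoGroup F =>
        (inner ℝ ((↑(u : (M)ˣ)⁻¹ : M) x) ((↑(u : (M)ˣ)⁻¹ : M) y) : ℝ)) w'⁻¹
    dsimp only
    rw [← key]
    refine integral_congr_ae (Filter.Eventually.of_forall fun u => ?_)
    have h1 : ((↑((w'⁻¹ * u : isoGroup F) : (M)ˣ)⁻¹ : M)) =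
        ((↑(u : (M)ˣ)⁻¹ : M)) * (w : M) := by
      simp [mul_comm]
      rfl
    have h2 : ∀ z : E, ((↑(u : (M)ˣ)⁻¹ : M) * (w : M)) z = (↑(u : (M)ˣ)⁻¹ : M) (T z) := by
      intro z
      rw [ContinuousLinearMap.mul_apply, hwval]
    simp only [h1, h2]

end NormConj

namespace NormConj

/-- A second type copy, to carry the invariant inner product. -/
def W (n : ℕ) := EuclideanSpace ℝ (Fin n)

noncomputable instance : AddCommGroup (W n) :=
  inferInstanceAs (AddCommGroup (EuclideanSpace ℝ (Fin n)))
noncomputable instance : Module ℝ (W n) :=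
  inferInstanceAs (Module ℝ (EuclideanSpace ℝ (Fin n)))

noncomputable def toW {n : ℕ} : EuclideanSpace ℝ (Fin n) ≃ₗ[ℝ] W n := LinearEquiv.refl ℝ _

end NormConj

open NormConj in
/-- The isometry group of a norm on `ℝⁿ` is conjugate, by a linear equivalence, to a
subgroup of the Euclidean isometry group. -/
theorem norm_isometries_conjugate_to_euclidean_isometries
    {n : ℕ} (F : EuclideanSpace ℝ (Fin n) → ℝ)
    (h_subadd : ∀ x y, F (x + y) ≤ F x + F y)
    (h_homog : ∀ (x : EuclideanSpace ℝ (Fin n)) (l : ℝ), F (l • x) = |l| * F x)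
    (h_sep : ∀ x : EuclideanSpace ℝ (Fin n), F x = 0 ↔ x = 0) :
    ∃ A : EuclideanSpace ℝ (Fin n) ≃ₗ[ℝ] EuclideanSpace ℝ (Fin n),
      ∀ g : EuclideanSpace ℝ (Fin n) → EuclideanSpace ℝ (Fin n),
        Function.Bijective g →
        (∀ x y, F (g y - g x) = F (y - x)) →
        ∀ x y, ‖A (g (A.symm y)) - A (g (A.symm x))‖ = ‖y - x‖ := by
  classical
  obtain ⟨B, hsymm, haddl, hsmull, hnn, hpos, hinv⟩ :=
    exists_invariant_inner F h_subadd h_homog h_sep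
  -- put the invariant inner product on the type copy `W n`
  letI core : InnerProductSpace.Core ℝ (W n) :=
    { inner := fun x y => B (toW.symm x) (toW.symm y)
      conj_inner_symm := fun x y => by simpa using hsymm (toW.symm y) (toW.symm x)
      re_inner_nonneg := fun x => by simpa using hnn (toW.symm x)
      add_left := fun x y z => by simpa using haddl (toW.symm x) (toW.symm y) (toW.symm z)
      smul_left := fun x y r => by simpa using hsmull r (toW.symm x) (toW.symm y)
      definite := fun x hx => by
        by_contra hne
        exact absurd hx (ne_of_gt (hpos (toW.symm x) hne)) }
  letI : NormedAddCommGroup (W n) := core.toNormedAddCommGroup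
  letI : InnerProductSpace ℝ (W n) := InnerProductSpace.ofCore core.toCore
  haveI : FiniteDimensional ℝ (W n) := Module.Finite.equiv (toW (n := n))
  have hrank : Module.finrank ℝ (W n) = n := by
    rw [← (toW (n := n)).finrank_eq]
    exact finrank_euclideanSpace_fin
  -- orthonormal basis gives a linear isometry to Euclidean space
  let obr : OrthonormalBasis (Fin n) ℝ (W n) :=
    (stdOrthonormalBasis ℝ (W n)).reindex (finCongr hrank)
  let iso : W n ≃ₗᵢ[ℝ] EuclideanSpace ℝ (Fin n) := obr.repr
  refine ⟨(toW (n := n)).trans iso.toLinearEquiv, ?_⟩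
  have hAnorm : ∀ z : EuclideanSpace ℝ (Fin n),
      ‖((toW (n := n)).trans iso.toLinearEquiv) z‖ = Real.sqrt (B z z) := by
    intro z
    have h1 : ‖((toW (n := n)).trans iso.toLinearEquiv) z‖ = ‖toW (n := n) z‖ := iso.norm_map _
    have h2 : ‖toW (n := n) z‖ = Real.sqrt (B z z) := rfl
    rw [h1, h2]
  intro g hbij hg
  set A := (toW (n := n)).trans iso.toLinearEquiv with hA
  -- Mazur–Ulam: `g` is affine
  letI := nvGroup F h_subadd h_homog h_sep
  letI := nvSpace F h_subadd h_homog h_sep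
  let geq : NV n ≃ᵢ NV n :=
    { toEquiv := Equiv.ofBijective (fun x : NV n => (g (toNV.symm x) : NV n)) (by exact hbij)
      isometry_toFun := by
        refine Isometry.of_dist_eq fun a b => ?_
        show dist (toNV (g (toNV.symm a))) (toNV (g (toNV.symm b))) = dist a b
        rw [dist_eq_norm, dist_eq_norm]
        show F (g (toNV.symm a) - g (toNV.symm b)) = F (toNV.symm a - toNV.symm b)
        exact hg (toNV.symm b) (toNV.symm a) }
  let L : NV n ≃ₗᵢ[ℝ] NV n := geq.toRealLinearIsometryEquiv
  have hLapp : ∀ z : NV n, L z = geq z - geq 0 := fun z =>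
    geq.toRealLinearIsometryEquiv_apply z
  -- view the linear part as a continuous linear map on Euclidean space
  let Tlin : EuclideanSpace ℝ (Fin n) →ₗ[ℝ] EuclideanSpace ℝ (Fin n) := by
    exact L.toLinearEquiv.toLinearMap
  let T : EuclideanSpace ℝ (Fin n) →L[ℝ] EuclideanSpace ℝ (Fin n) :=
    LinearMap.toContinuousLinearMap Tlin
  have hTapp : ∀ z : EuclideanSpace ℝ (Fin n), T z = g z - g 0 := by
    intro z
    have := hLapp (toNV z)
    exact this
  have hTF : ∀ z : EuclideanSpace ℝ (Fin n), F (T z) = F z := by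
    intro z
    have := L.norm_map (toNV z)
    exact this
  have hBinv := hinv T hTF
  intro x y
  have hgdiff : g (A.symm y) - g (A.symm x) = T (A.symm y - A.symm x) := by
    rw [map_sub, hTapp, hTapp]
    abel
  rw [← map_sub A, hgdiff, hAnorm, hBinv, ← hAnorm, ← map_sub A.symm, A.apply_symm_apply]
end

section
/- Let δ : ℝⁿ × ℝⁿ → ℝ be a finite weak metric, i.e. δ(x,y) ≥ 0, δ(x,x) = 0 for all x, and δ(x,z) ≤ δ(x,y) + δ(y,z) for all x, y, z. Then δ is a weak Minkowski metric (translation invariant and projective) if and only if δ satisfies the midpoint property and its restriction to every affine line is continuous, i.e. for all a, b ∈ ℝⁿ, setting γ(t) = (1−t)•a + t•b, the functions t ↦ δ(γ(t), b) and t ↦ δ(a, γ(t)) are continuous on ℝ. -/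
open Filter Topology

namespace BusemannAux

variable {V : Type*} [NormedAddCommGroup V] [NormedSpace ℝ V]

/-- Affine segment parametrization. -/
def seg (a b : V) (t : ℝ) : V := (1 - t) • a + t • b

lemma seg_zero (a b : V) : seg a b 0 = a := by simp [seg]

lemma seg_one (a b : V) : seg a b 1 = b := by simp [seg]

lemma seg_mid (a b : V) (s t : ℝ) :
    (1/2 : ℝ) • (seg a b s + seg a b t) = seg a b ((s + t) / 2) := by
  unfold seg; module

/-- An additive, nonnegative function on the nonnegative reals is linear. -/
lemma lin_of_add (F : ℝ → ℝ) (h0 : F 0 = 0)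
    (hadd : ∀ s u : ℝ, 0 ≤ s → 0 ≤ u → F (s + u) = F s + F u)
    (hnn : ∀ t : ℝ, 0 ≤ F t) :
    ∀ t : ℝ, 0 ≤ t → F t = t * F 1 := by
  have mono : ∀ s t : ℝ, 0 ≤ s → s ≤ t → F s ≤ F t := by
    intro s t hs hst
    have h := hadd s (t - s) hs (by linarith)
    rw [show s + (t - s) = t by ring] at h
    have := hnn (t - s)
    linarith
  have natmul : ∀ (m : ℕ) (x : ℝ), 0 ≤ x → F ((m : ℝ) * x) = (m : ℝ) * F x := by
    intro m
    induction m with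
    | zero => intro x _; simp [h0]
    | succ m ih =>
      intro x hx
      have h1 := hadd ((m : ℝ) * x) x (by positivity) hx
      rw [show (m : ℝ) * x + x = ((m : ℝ) + 1) * x by ring] at h1
      push_cast
      rw [h1, ih x hx]; ring
  have dy : ∀ n : ℕ, F ((1 : ℝ)/2^n) = F 1 / 2^n := by
    intro n
    induction n with
    | zero => simp
    | succ n ih =>
      have h2 := hadd (1/2^(n+1)) (1/2^(n+1)) (by positivity) (by positivity)
      rw [show (1:ℝ)/2^(n+1) + 1/2^(n+1) = 1/2^n by ring] at h2
      have : F ((1:ℝ)/2^(n+1)) = F ((1:ℝ)/2^n) / 2 := by linarith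
      rw [this, ih]; ring
  intro t ht
  have key : ∀ n : ℕ, |F t - t * F 1| ≤ F 1 * (1/2)^n := by
    intro n
    have h2 : (0:ℝ) < 2^n := by positivity
    set K : ℕ := ⌊t * 2^n⌋₊ with hKdef
    have hfl : (K : ℝ) ≤ t * 2^n := Nat.floor_le (by positivity)
    have hfu : t * 2^n < (K : ℝ) + 1 := Nat.lt_floor_add_one _
    have hlb : (K : ℝ) * (1/2^n) ≤ t := by
      rw [mul_one_div, div_le_iff₀ h2]; linarith
    have hub : t ≤ ((K : ℝ) + 1) * (1/2^n) := by
      rw [mul_one_div, le_div_iff₀ h2]; linarith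
    have hlow : F ((K : ℝ) * (1/2^n)) ≤ F t := mono _ _ (by positivity) hlb
    have hupp : F t ≤ F (((K : ℝ) + 1) * (1/2^n)) := mono t _ ht hub
    have e1 : F ((K : ℝ) * (1/2^n)) = (K : ℝ) * (F 1 / 2^n) := by
      rw [natmul K _ (by positivity), dy]
    have e2 : F (((K : ℝ) + 1) * (1/2^n)) = ((K : ℝ) + 1) * (F 1 / 2^n) := by
      have h := natmul (K + 1) (1/2^n) (by positivity)
      push_cast at h
      rw [h, dy]
    have hF1 : 0 ≤ F 1 := hnn 1
    have b1 : (K : ℝ) * (F 1 / 2^n) ≤ t * F 1 := by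
      have := mul_le_mul_of_nonneg_right hlb hF1
      calc (K : ℝ) * (F 1 / 2^n) = (K : ℝ) * (1/2^n) * F 1 := by ring
        _ ≤ t * F 1 := this
    have b2 : t * F 1 ≤ ((K : ℝ) + 1) * (F 1 / 2^n) := by
      have := mul_le_mul_of_nonneg_right hub hF1
      calc t * F 1 ≤ ((K : ℝ) + 1) * (1/2^n) * F 1 := this
        _ = ((K : ℝ) + 1) * (F 1 / 2^n) := by ring
    have hw : F 1 * (1/2:ℝ)^n = F 1 / 2^n := by
      rw [div_pow, one_pow]; ring
    rw [abs_le, hw]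
    constructor <;> nlinarith
  by_contra hne
  have habs : 0 < |F t - t * F 1| := by
    rcases lt_or_eq_of_le (abs_nonneg (F t - t * F 1)) with h | h
    · exact h
    · exact absurd (by linarith [abs_eq_zero.mp h.symm] : F t = t * F 1) hne
  have hF1 : 0 ≤ F 1 := hnn 1
  rcases eq_or_lt_of_le hF1 with h | h
  · have hk := key 0
    rw [pow_zero, mul_one] at hk
    linarith
  · obtain ⟨n, hn⟩ := exists_pow_lt_of_lt_one
      (show (0:ℝ) < |F t - t * F 1| / F 1 from div_pos habs h) (by norm_num : (1:ℝ)/2 < 1)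
    have := key n
    rw [lt_div_iff₀ h] at hn
    nlinarith

end BusemannAux

open BusemannAux

section Main

variable {V : Type*} [NormedAddCommGroup V] [NormedSpace ℝ V]

/-- Key backward lemma: midpoint property + continuity on lines gives linear values
along segments. -/
private lemma seg_vals (δ : V → V → ℝ)
    (h_refl : ∀ x, δ x x = 0)
    (h_triangle : ∀ x y z, δ x z ≤ δ x y + δ y z)
    (hmid : ∀ p q : V, δ p ((1/2 : ℝ) • (p + q)) = δ ((1/2 : ℝ) • (p + q)) q ∧
      δ p ((1/2 : ℝ) • (p + q)) = δ p q / 2)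
    (a b : V)
    (hc1 : Continuous fun t : ℝ => δ (seg a b t) b)
    (hc2 : Continuous fun t : ℝ => δ a (seg a b t))
    (t : ℝ) (ht0 : 0 ≤ t) (ht1 : t ≤ 1) :
    δ a (seg a b t) = t * δ a b ∧ δ (seg a b t) b = (1 - t) * δ a b := by
  have hmidL : ∀ s u : ℝ, δ (seg a b s) (seg a b ((s+u)/2)) = δ (seg a b s) (seg a b u) / 2 := by
    intro s u
    have h := (hmid (seg a b s) (seg a b u)).2
    rwa [seg_mid] at h
  have hmidS : ∀ s u : ℝ, δ (seg a b s) (seg a b ((s+u)/2))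
      = δ (seg a b ((s+u)/2)) (seg a b u) := by
    intro s u
    have h := (hmid (seg a b s) (seg a b u)).1
    rwa [seg_mid] at h
  set c := δ (seg a b 0) (seg a b 1) with hc
  have dyu : ∀ n : ℕ, δ (seg a b 0) (seg a b (1/2^n)) = c / 2^n := by
    intro n
    induction n with
    | zero => norm_num [hc]
    | succ n ih =>
      have h := hmidL 0 (1/2^n)
      rw [show ((0:ℝ) + 1/2^n)/2 = 1/2^(n+1) by ring] at h
      rw [h, ih]; ring
  have stepc : ∀ (h : ℝ) (j : ℕ),
      δ (seg a b ((j:ℝ)*h)) (seg a b (((j:ℝ)+1)*h)) = δ (seg a b 0) (seg a b h) := by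
    intro h j
    induction j with
    | zero => norm_num
    | succ j ih =>
      have hs := hmidS ((j:ℝ)*h) (((j:ℝ)+2)*h)
      rw [show ((j:ℝ)*h + ((j:ℝ)+2)*h)/2 = ((j:ℝ)+1)*h by ring] at hs
      push_cast
      rw [show ((j:ℝ)+1+1)*h = ((j:ℝ)+2)*h by ring, ← hs]
      exact ih
  have chain : ∀ (h : ℝ) (j k : ℕ),
      δ (seg a b ((j:ℝ)*h)) (seg a b (((j:ℝ)+(k:ℝ))*h))
        ≤ (k:ℝ) * δ (seg a b 0) (seg a b h) := by
    intro h j k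
    induction k with
    | zero => simp [h_refl]
    | succ k ih =>
      have tri := h_triangle (seg a b ((j:ℝ)*h)) (seg a b (((j:ℝ)+(k:ℝ))*h))
        (seg a b (((j:ℝ)+((k:ℝ)+1))*h))
      have hstep := stepc h (j + k)
      push_cast at hstep
      rw [show ((j:ℝ)+(k:ℝ)+1)*h = ((j:ℝ)+((k:ℝ)+1))*h by ring] at hstep
      push_cast
      linarith
  have dyval : ∀ (n k : ℕ), k ≤ 2^n →
      δ (seg a b 0) (seg a b ((k:ℝ)/2^n)) = ((k:ℝ)/2^n) * c ∧
      δ (seg a b ((k:ℝ)/2^n)) (seg a b 1) = (1 - (k:ℝ)/2^n) * c := by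
    intro n k hk
    have h2 : (0:ℝ) < 2^n := by positivity
    set u := δ (seg a b 0) (seg a b (1/2^n)) with hu
    have hcu : c = 2^n * u := by
      rw [hu, dyu n]; field_simp
    have hA := chain (1/2^n) 0 k
    rw [show ((0:ℕ):ℝ) + (k:ℝ) = (k:ℝ) by push_cast; ring,
        show ((0:ℕ):ℝ) * ((1:ℝ)/2^n) = 0 by push_cast; ring,
        show (k:ℝ) * ((1:ℝ)/2^n) = (k:ℝ)/2^n by ring] at hA
    have hB := chain (1/2^n) k (2^n - k)
    have hcast : ((2^n - k : ℕ) : ℝ) = 2^n - (k:ℝ) := by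
      push_cast [hk]; ring
    rw [hcast] at hB
    rw [show ((k:ℝ) + ((2:ℝ)^n - (k:ℝ))) * ((1:ℝ)/2^n) = 1 by field_simp; ring,
        show (k:ℝ) * ((1:ℝ)/2^n) = (k:ℝ)/2^n by ring, sub_mul] at hB
    have hC := h_triangle (seg a b 0) (seg a b ((k:ℝ)/2^n)) (seg a b 1)
    rw [← hc, hcu] at hC
    have hkk : (k:ℝ) * u = ((k:ℝ)/2^n) * c := by
      rw [hcu]; field_simp
    have hkk2 : (2:ℝ)^n * u - (k:ℝ) * u = (1 - (k:ℝ)/2^n) * c := by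
      rw [hcu]; field_simp
    constructor
    · rw [← hkk]; linarith
    · rw [← hkk2]; linarith
  -- sequence of dyadic approximations
  have hxt : Tendsto (fun n : ℕ => ((⌊t*2^n⌋₊ : ℕ) : ℝ)/2^n) atTop (𝓝 t) := by
    apply tendsto_of_tendsto_of_tendsto_of_le_of_le
      (g := fun n : ℕ => t - (1/2:ℝ)^n) (h := fun _ : ℕ => t)
    · have hp : Tendsto (fun n : ℕ => ((1:ℝ)/2)^n) atTop (𝓝 0) :=
        tendsto_pow_atTop_nhds_zero_of_lt_one (by norm_num) (by norm_num)
      simpa using tendsto_const_nhds.sub hp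
    · exact tendsto_const_nhds
    · intro n
      have h2 : (0:ℝ) < 2^n := by positivity
      have h1 : t * 2^n < (⌊t*2^n⌋₊ : ℝ) + 1 := Nat.lt_floor_add_one _
      rw [le_div_iff₀ h2]
      have hw : ((1:ℝ)/2)^n * 2^n = 1 := by
        rw [div_pow, one_pow]; field_simp
      nlinarith
    · intro n
      have h2 : (0:ℝ) < 2^n := by positivity
      rw [div_le_iff₀ h2]
      exact Nat.floor_le (by positivity)
  have hk2 : ∀ n : ℕ, ⌊t*2^n⌋₊ ≤ 2^n := by
    intro n
    have h1 : t * 2^n ≤ ((2^n : ℕ) : ℝ) := by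
      push_cast
      nlinarith [pow_pos (show (0:ℝ) < 2 by norm_num) n]
    calc ⌊t*2^n⌋₊ ≤ ⌊((2^n : ℕ) : ℝ)⌋₊ := Nat.floor_le_floor h1
      _ = 2^n := Nat.floor_natCast _
  have hcab : c = δ a b := by rw [hc, seg_zero, seg_one]
  have hFk : ∀ n : ℕ, δ a (seg a b ((⌊t*2^n⌋₊ : ℝ)/2^n))
      = ((⌊t*2^n⌋₊ : ℝ)/2^n) * δ a b := by
    intro n
    have h := (dyval n _ (hk2 n)).1
    rw [seg_zero, hcab] at h
    exact h
  have hGk : ∀ n : ℕ, δ (seg a b ((⌊t*2^n⌋₊ : ℝ)/2^n)) b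
      = (1 - (⌊t*2^n⌋₊ : ℝ)/2^n) * δ a b := by
    intro n
    have h := (dyval n _ (hk2 n)).2
    rw [seg_one, hcab] at h
    exact h
  constructor
  · have l1 : Tendsto (fun n : ℕ => δ a (seg a b ((⌊t*2^n⌋₊ : ℝ)/2^n))) atTop
        (𝓝 (δ a (seg a b t))) := (hc2.tendsto t).comp hxt
    have l2 : Tendsto (fun n : ℕ => δ a (seg a b ((⌊t*2^n⌋₊ : ℝ)/2^n))) atTop
        (𝓝 (t * δ a b)) := by
      have := hxt.mul_const (δ a b)
      exact this.congr (fun n => (hFk n).symm)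
    exact tendsto_nhds_unique l1 l2
  · have l1 : Tendsto (fun n : ℕ => δ (seg a b ((⌊t*2^n⌋₊ : ℝ)/2^n)) b) atTop
        (𝓝 (δ (seg a b t) b)) := (hc1.tendsto t).comp hxt
    have l2 : Tendsto (fun n : ℕ => δ (seg a b ((⌊t*2^n⌋₊ : ℝ)/2^n)) b) atTop
        (𝓝 ((1 - t) * δ a b)) := by
      have := ((tendsto_const_nhds (x := (1:ℝ))).sub hxt).mul_const (δ a b)
      exact this.congr (fun n => (hGk n).symm)
    exact tendsto_nhds_unique l1 l2

/-- Scaling along rays, from segment values. -/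
private lemma bwd_scale (δ : V → V → ℝ)
    (vals1 : ∀ (a b : V) (t : ℝ), 0 ≤ t → t ≤ 1 → δ a (seg a b t) = t * δ a b) :
    ∀ (x v : V) (T : ℝ), 1 ≤ T → δ x (x + T•v) = T * δ x (x + v) := by
  intro x v T hT
  have hT0 : (0:ℝ) < T := by linarith
  have hTne : T ≠ 0 := ne_of_gt hT0
  have h1 := vals1 x (x + T•v) (1/T) (by positivity) (by rw [div_le_one hT0]; linarith)
  rw [show seg x (x + T•v) (1/T) = x + v by
    unfold seg; match_scalars <;> field_simp <;> ring] at h1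
  rw [h1]; field_simp

/-- Translation invariance from midpoint property + segment scaling. -/
private lemma bwd_trans (δ : V → V → ℝ)
    (h_nonneg : ∀ x y, 0 ≤ δ x y)
    (h_triangle : ∀ x y z, δ x z ≤ δ x y + δ y z)
    (hmid : ∀ p q : V, δ p ((1/2 : ℝ) • (p + q)) = δ ((1/2 : ℝ) • (p + q)) q ∧
      δ p ((1/2 : ℝ) • (p + q)) = δ p q / 2)
    (scale : ∀ (x v : V) (T : ℝ), 1 ≤ T → δ x (x + T•v) = T * δ x (x + v)) :
    ∀ x y v : V, δ (x + v) (y + v) = δ x y := by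
  have cost : ∀ x x' v : V, δ x (x + v) ≤ δ x' (x' + v) := by
    intro x x' v
    by_contra hlt
    push_neg at hlt
    have key : ∀ T : ℝ, 1 ≤ T →
        T * (δ x (x + v) - δ x' (x' + v)) ≤ δ x x' + δ x' x := by
      intro T hT
      have m1 := (hmid x (x' + T•v)).2
      have m2a := (hmid x' (x + T•v)).1
      have m2b := (hmid x' (x + T•v)).2
      rw [show (1/2:ℝ)•(x' + (x + T•v)) = (1/2:ℝ)•(x + (x' + T•v)) by module] at m2a m2b
      have tri := h_triangle x ((1/2:ℝ)•(x + (x' + T•v))) (x + T•v)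
      have s1 := scale x v T hT
      have s2 := scale x' v T hT
      have t2 := h_triangle x x' (x' + T•v)
      have t3 := h_triangle x' x (x + T•v)
      linarith
    set cx := δ x (x + v)
    set cy := δ x' (x' + v)
    set K := δ x x' + δ x' x with hK
    have hpos : 0 < cx - cy := by linarith
    have h1 := key (max 1 ((K + 1)/(cx - cy))) (le_max_left _ _)
    have h2 : ((K + 1)/(cx - cy)) * (cx - cy) = K + 1 :=
      div_mul_cancel₀ _ (ne_of_gt hpos)
    have h3 : ((K + 1)/(cx - cy)) ≤ max 1 ((K + 1)/(cx - cy)) := le_max_right _ _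
    have h4 : K + 1 ≤ max 1 ((K + 1)/(cx - cy)) * (cx - cy) := by
      calc K + 1 = ((K + 1)/(cx - cy)) * (cx - cy) := h2.symm
        _ ≤ max 1 ((K + 1)/(cx - cy)) * (cx - cy) :=
            mul_le_mul_of_nonneg_right h3 (le_of_lt hpos)
    linarith
  intro x y v
  have e1 : (x + v) + (y - x) = y + v := by abel
  have e2 : x + (y - x) = y := by abel
  refine le_antisymm ?_ ?_
  · have h := cost (x + v) x (y - x)
    rw [e1, e2] at h
    exact h
  · have h := cost x (x + v) (y - x)
    rw [e1, e2] at h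
    exact h

/-- Forward direction: continuity along lines. -/
private lemma fwd_cont (δ : V → V → ℝ)
    (h_nonneg : ∀ x y, 0 ≤ δ x y)
    (h_refl : ∀ x, δ x x = 0)
    (hT : ∀ x y v : V, δ (x + v) (y + v) = δ x y)
    (hP : ∀ x y z : V, (∃ t : ℝ, 0 ≤ t ∧ t ≤ 1 ∧ y = (1 - t) • x + t • z) →
      δ x z = δ x y + δ y z)
    (a b : V) :
    Continuous (fun t : ℝ => δ (seg a b t) b) ∧
    Continuous (fun t : ℝ => δ a (seg a b t)) := by
  have hshift : ∀ s u : ℝ, δ (seg a b s) (seg a b (s + u)) = δ a (seg a b u) := by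
    intro s u
    have h := hT a (seg a b u) (s • (b - a))
    rw [show a + s•(b-a) = seg a b s by unfold seg; module,
        show seg a b u + s•(b-a) = seg a b (s + u) by unfold seg; module] at h
    exact h
  have hseg0 : seg a b 0 = a := seg_zero a b
  set F : ℝ → ℝ := fun t => δ a (seg a b t) with hF
  have hF0 : F 0 = 0 := by simp only [hF, hseg0]; exact h_refl a
  have hFadd : ∀ s u : ℝ, 0 ≤ s → 0 ≤ u → F (s + u) = F s + F u := by
    intro s u hs hu
    rcases eq_or_lt_of_le (show (0:ℝ) ≤ s + u by linarith) with h | h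
    · have hs0 : s = 0 := by linarith
      have hu0 : u = 0 := by linarith
      simp [hs0, hu0, hF0]
    · have hne : s + u ≠ 0 := ne_of_gt h
      have hb : seg a b s = (1 - s/(s+u)) • a + (s/(s+u)) • (seg a b (s+u)) := by
        unfold seg; match_scalars <;> field_simp <;> ring
      have hsp := hP a (seg a b s) (seg a b (s+u))
        ⟨s/(s+u), by positivity, by rw [div_le_one h]; linarith, hb⟩
      rw [hshift s u] at hsp
      exact hsp
  have hFmadd : ∀ s u : ℝ, 0 ≤ s → 0 ≤ u →
      δ a (seg a b (-(s + u))) = δ a (seg a b (-s)) + δ a (seg a b (-u)) := by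
    intro s u hs hu
    rcases eq_or_lt_of_le (show (0:ℝ) ≤ s + u by linarith) with h | h
    · have hs0 : s = 0 := by linarith
      have hu0 : u = 0 := by linarith
      have h00 : δ a (seg a b 0) = 0 := by rw [hseg0]; exact h_refl a
      simp only [hs0, hu0, add_zero, neg_zero, h00]
    · have hne : s + u ≠ 0 := ne_of_gt h
      have hb : seg a b (-s) = (1 - s/(s+u)) • a + (s/(s+u)) • (seg a b (-(s+u))) := by
        unfold seg; match_scalars <;> field_simp <;> ring
      have hsp := hP a (seg a b (-s)) (seg a b (-(s+u)))
        ⟨s/(s+u), by positivity, by rw [div_le_one h]; linarith, hb⟩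
      have hsh := hshift (-s) (-u)
      rw [show -s + -u = -(s+u) by ring] at hsh
      rw [hsh] at hsp
      exact hsp
  have linF := lin_of_add F hF0 hFadd (fun t => h_nonneg _ _)
  have linFm := lin_of_add (fun t => δ a (seg a b (-t)))
    (by simpa [hF] using hF0) hFmadd (fun t => h_nonneg _ _)
  have hFeq : F = fun t : ℝ => max t 0 * F 1 + max (-t) 0 * F (-1) := by
    funext s
    rcases le_total 0 s with h | h
    · rw [max_eq_left h, max_eq_right (by linarith : -s ≤ 0), linF s h]
      ring
    · have hlm := linFm (-s) (by linarith : (0:ℝ) ≤ -s)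
      rw [neg_neg] at hlm
      rw [max_eq_right h, max_eq_left (by linarith : (0:ℝ) ≤ -s)]
      show δ a (seg a b s) = 0 * F 1 + -s * F (-1)
      rw [hlm]
      show -s * δ a (seg a b (-1)) = 0 * F 1 + -s * δ a (seg a b (-1))
      ring
  have hFc : Continuous F := by
    rw [hFeq]
    exact ((continuous_id.max continuous_const).mul continuous_const).add
      (((continuous_neg).max continuous_const).mul continuous_const)
  have hGF : (fun t : ℝ => δ (seg a b t) b) = fun t : ℝ => F (1 - t) := by
    funext s
    have h := hshift s (1 - s)
    rw [show s + (1 - s) = (1:ℝ) by ring, seg_one] at h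
    exact h
  constructor
  · rw [hGF]
    exact hFc.comp (continuous_const.sub continuous_id)
  · exact hFc

end Main

/-- Busemann's characterization: a finite weak metric on `ℝⁿ` is a weak Minkowski metric
(translation invariant and projective) if and only if it satisfies the midpoint property
and its restriction to every affine line is continuous. -/
theorem finite_weak_metric_minkowski_iff_midpoint_and_line_continuous
    {n : ℕ} (δ : EuclideanSpace ℝ (Fin n) → EuclideanSpace ℝ (Fin n) → ℝ)
    (h_nonneg : ∀ x y, 0 ≤ δ x y)
    (h_refl : ∀ x, δ x x = 0)
    (h_triangle : ∀ x y z, δ x z ≤ δ x y + δ y z) :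
    ((∀ x y v, δ (x + v) (y + v) = δ x y) ∧
     (∀ x y z : EuclideanSpace ℝ (Fin n),
        (∃ t : ℝ, 0 ≤ t ∧ t ≤ 1 ∧ y = (1 - t) • x + t • z) →
        δ x z = δ x y + δ y z)) ↔
    ((∀ p q : EuclideanSpace ℝ (Fin n),
        δ p ((1/2 : ℝ) • (p + q)) = δ ((1/2 : ℝ) • (p + q)) q ∧
        δ p ((1/2 : ℝ) • (p + q)) = δ p q / 2) ∧
     (∀ a b : EuclideanSpace ℝ (Fin n),
        Continuous (fun t : ℝ => δ ((1 - t) • a + t • b) b) ∧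
        Continuous (fun t : ℝ => δ a ((1 - t) • a + t • b)))) := by
  constructor
  · rintro ⟨hT, hP⟩
    constructor
    · intro p q
      have hbet : (1/2:ℝ)•(p+q) = (1 - (1/2:ℝ))•p + (1/2:ℝ)•q := by module
      have hsplit := hP p ((1/2:ℝ)•(p+q)) q ⟨1/2, by norm_num, by norm_num, hbet⟩
      have hswap := hT p ((1/2:ℝ)•(p+q)) ((1/2:ℝ)•(p+q) - p)
      rw [show p + ((1/2:ℝ)•(p+q) - p) = (1/2:ℝ)•(p+q) by abel,
          show (1/2:ℝ)•(p+q) + ((1/2:ℝ)•(p+q) - p) = q by module] at hswap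
      exact ⟨hswap.symm, by linarith⟩
    · intro a b
      exact ⟨(fwd_cont δ h_nonneg h_refl hT hP a b).1,
             (fwd_cont δ h_nonneg h_refl hT hP a b).2⟩
  · rintro ⟨hmid, hcont⟩
    have vals : ∀ (a b : EuclideanSpace ℝ (Fin n)) (t : ℝ), 0 ≤ t → t ≤ 1 →
        δ a (seg a b t) = t * δ a b ∧ δ (seg a b t) b = (1 - t) * δ a b :=
      fun a b => seg_vals δ h_refl h_triangle hmid a b (hcont a b).1 (hcont a b).2
    constructor
    · intro x y v
      exact bwd_trans δ h_nonneg h_triangle hmid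
        (bwd_scale δ (fun a b t h0 h1 => (vals a b t h0 h1).1)) x y v
    · rintro x y z ⟨t, ht0, ht1, rfl⟩
      obtain ⟨e1, e2⟩ := vals x z t ht0 ht1
      show δ x z = δ x (seg x z t) + δ (seg x z t) z
      rw [e1, e2]; ring
end
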